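/- For all real numbers x > 0 and y > 0 and any real p > 1, one has x^p * e^y ≤ e^y * (1+y)^p + C(p) * e^{2x}, where C(p) = p * e^{-1} * sup over x>0 of x^p e^{-x} is a constant depending only on p. More precisely, x^p e^y - e^y (1+y)^p ≤ p e^{x-1} x^p for all x, y > 0. -/
import Mathlib

/-- Elementary inequality: for `x, y > 0` and `p > 1`,
`x^p e^y - e^y (1+y)^p ≤ p e^{x-1} x^p`, hence `x^p e^y ≤ e^y (1+y)^p + C(p) e^{2x}`. -/
theorem stmt0 (p x y : ℝ) (hx : 0 < x) (hy : 0 < y) (hp : 1 < p) :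
    x ^ p * Real.exp y - Real.exp y * (1 + y) ^ p ≤ p * Real.exp (x - 1) * x ^ p := by
  have hxp : 0 ≤ x ^ p := Real.rpow_nonneg hx.le p
  have hrhs : 0 ≤ p * Real.exp (x - 1) * x ^ p := by positivity
  rcases le_or_gt x (1 + y) with h | h
  · have : x ^ p ≤ (1 + y) ^ p := Real.rpow_le_rpow hx.le h (by linarith)
    nlinarith [Real.exp_pos y, Real.exp_pos y |>.le]
  · have hy' : y ≤ x - 1 := by linarith
    have he : Real.exp y ≤ Real.exp (x - 1) := Real.exp_le_exp.mpr hy'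
    have h1 : x ^ p * Real.exp y - Real.exp y * (1 + y) ^ p ≤ x ^ p * Real.exp y := by
      nlinarith [Real.exp_pos y, Real.rpow_nonneg (by linarith : (0:ℝ) ≤ 1 + y) p]
    have h2 : x ^ p * Real.exp y ≤ x ^ p * Real.exp (x - 1) :=
      mul_le_mul_of_nonneg_left he hxp
    nlinarith [Real.exp_pos (x - 1)]
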